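/- arXiv:1711.05009 — 2 statements merged into one kernel-verified Lean document; each statement's English description precedes it below -/
import Mathlib

section
/- Fix n ≥ 1, q ∈ ℝⁿ, and let U belong to the sub-σ-algebra of Borel sets of ℝⁿ generated by the half-spaces {x : x_i ≥ q_i}, i = 1,…,n. Let φ be a Schwartz function on ℝⁿ. Then for each i there is a measurable function ε_i : ℝ^{n−1} → {−1, 0, 1} such that ∫_U ∂φ/∂x_i (x) dx = ∫_{Piv_i(U)} ε_i(x̃) φ(x₁,…,x_{i−1}, q_i, x_{i+1},…,xₙ) dx̃, where x̃ = (x₁,…,x_{i−1},x_{i+1},…,xₙ) and Piv_i(U) is viewed as a subset of ℝ^{n−1}. -/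
open MeasureTheory

/-- Insert the value `q` at coordinate `i`, the other coordinates being given by `x̃`. -/
noncomputable def insertCoord {n : ℕ} (i : Fin n) (q : ℝ)
    (xt : {j : Fin n // j ≠ i} → ℝ) : Fin n → ℝ :=
  fun j => if h : j = i then q else xt ⟨j, h⟩

/-- The pivotal set of `U` in direction `i`. -/
def Piv {n : ℕ} (i : Fin n) (U : Set (Fin n → ℝ)) : Set (Fin n → ℝ) :=
  {x | ∃ y₁ y₂ : ℝ, Function.update x i y₁ ∈ U ∧ Function.update x i y₂ ∉ U}

open Set Filter Topology

section Aux

variable {n : ℕ} (i : Fin n)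

lemma update_insertCoord (xt : {j : Fin n // j ≠ i} → ℝ) (a y : ℝ) :
    Function.update (insertCoord i a xt) i y = insertCoord i y xt := by
  funext j
  rcases eq_or_ne j i with h | h
  · subst h; simp [insertCoord]
  · simp [insertCoord, h, Function.update_of_ne h]

lemma measurable_insertCoord (a : ℝ) :
    Measurable (fun xt : {j : Fin n // j ≠ i} → ℝ => insertCoord i a xt) := by
  apply measurable_pi_lambda
  intro j
  rcases eq_or_ne j i with h | h
  · subst h; simp only [insertCoord, dif_pos rfl]; exact measurable_const
  · simp only [insertCoord, dif_neg h]; exact measurable_pi_apply _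

lemma continuous_insertCoord (xt : {j : Fin n // j ≠ i} → ℝ) :
    Continuous (fun y : ℝ => insertCoord i y xt) := by
  apply continuous_pi
  intro j
  rcases eq_or_ne j i with h | h
  · subst h; simp only [insertCoord, dif_pos rfl]; exact continuous_id
  · simp only [insertCoord, dif_neg h]; exact continuous_const

lemma abs_le_norm_insertCoord (xt : {j : Fin n // j ≠ i} → ℝ) (y : ℝ) :
    |y| ≤ ‖insertCoord i y xt‖ := by
  have h := norm_le_pi_norm (insertCoord i y xt) i
  simpa [insertCoord] using h

lemma schwartz_line (xt : {j : Fin n // j ≠ i} → ℝ) (ψ : SchwartzMap (Fin n → ℝ) ℝ) :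
    Integrable (fun y : ℝ => ψ (insertCoord i y xt)) ∧
      Tendsto (fun y : ℝ => ψ (insertCoord i y xt)) atTop (𝓝 0) ∧
      Tendsto (fun y : ℝ => ψ (insertCoord i y xt)) atBot (𝓝 0) := by
  set L : ℝ → (Fin n → ℝ) := fun y => insertCoord i y xt with hLdef
  have hL : Continuous L := continuous_insertCoord i xt
  have hLnorm : ∀ y, |y| ≤ ‖L y‖ := abs_le_norm_insertCoord i xt
  set C₀ := SchwartzMap.seminorm ℝ 0 0 ψ with hC₀
  set C₂ := SchwartzMap.seminorm ℝ 2 0 ψ with hC₂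
  have hsq : ∀ y : ℝ, y ^ 2 * ‖ψ (L y)‖ ≤ C₂ := by
    intro y
    have h := SchwartzMap.norm_pow_mul_le_seminorm ℝ ψ 2 (L y)
    have h2 : y ^ 2 ≤ ‖L y‖ ^ 2 := by
      rw [← sq_abs]
      exact pow_le_pow_left₀ (abs_nonneg y) (hLnorm y) 2
    calc y ^ 2 * ‖ψ (L y)‖ ≤ ‖L y‖ ^ 2 * ‖ψ (L y)‖ :=
          mul_le_mul_of_nonneg_right h2 (norm_nonneg _)
      _ ≤ C₂ := h
  have hC₂0 : 0 ≤ C₂ := apply_nonneg _ _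
  refine ⟨?_, ?_, ?_⟩
  · have hint : Integrable (fun y : ℝ => (C₀ + C₂) * (1 + y ^ 2)⁻¹) :=
      integrable_inv_one_add_sq.const_mul _
    refine hint.mono' ((ψ.continuous.comp hL).aestronglyMeasurable)
      (Eventually.of_forall fun y => ?_)
    have hb : (0 : ℝ) < 1 + y ^ 2 := by positivity
    have key : (1 + y ^ 2) * ‖ψ (L y)‖ ≤ C₀ + C₂ := by
      rw [add_mul, one_mul]
      exact add_le_add (ψ.norm_le_seminorm ℝ _) (hsq y)
    calc ‖ψ (L y)‖ = ((1 + y ^ 2) * ‖ψ (L y)‖) * (1 + y ^ 2)⁻¹ := by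
          field_simp
      _ ≤ (C₀ + C₂) * (1 + y ^ 2)⁻¹ := by gcongr
  · have hg : Tendsto (fun y : ℝ => C₂ * (y ^ 2)⁻¹) atTop (𝓝 0) := by
      have h1 : Tendsto (fun y : ℝ => y ^ 2) atTop atTop := tendsto_pow_atTop two_ne_zero
      simpa using h1.inv_tendsto_atTop.const_mul C₂
    apply squeeze_zero_norm' ?_ hg
    filter_upwards [eventually_ge_atTop (1 : ℝ)] with y hy
    have hy2 : (0 : ℝ) < y ^ 2 := by positivity
    calc ‖ψ (L y)‖ = (y ^ 2 * ‖ψ (L y)‖) * (y ^ 2)⁻¹ := by field_simp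
      _ ≤ C₂ * (y ^ 2)⁻¹ := by gcongr; exact hsq y
  · have h1 : Tendsto (fun y : ℝ => y ^ 2) atBot atTop := by
      have h0 : Tendsto (Neg.neg : ℝ → ℝ) atBot atTop := tendsto_neg_atBot_atTop
      have := (tendsto_pow_atTop (two_ne_zero (α := ℕ))).comp h0
      simpa [Function.comp_def, neg_sq] using this
    have hg : Tendsto (fun y : ℝ => C₂ * (y ^ 2)⁻¹) atBot (𝓝 0) := by
      simpa using h1.inv_tendsto_atTop.const_mul C₂
    apply squeeze_zero_norm' ?_ hg
    filter_upwards [eventually_le_atBot (-1 : ℝ)] with y hy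
    have hy2 : (0 : ℝ) < y ^ 2 := by nlinarith
    calc ‖ψ (L y)‖ = (y ^ 2 * ‖ψ (L y)‖) * (y ^ 2)⁻¹ := by
          field_simp [show y ≠ 0 by intro h0; linarith]
      _ ≤ C₂ * (y ^ 2)⁻¹ := by gcongr; exact hsq y

lemma insertCoord_eq_add (xt : {j : Fin n // j ≠ i} → ℝ) (y : ℝ) :
    insertCoord i y xt = insertCoord i 0 xt + y • (Pi.single i 1 : Fin n → ℝ) := by
  funext j
  rcases eq_or_ne j i with h | h
  · subst h; simp [insertCoord]
  · simp [insertCoord, h, Pi.single_apply]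

lemma hasDerivAt_line (xt : {j : Fin n // j ≠ i} → ℝ) (φ : SchwartzMap (Fin n → ℝ) ℝ)
    (y : ℝ) :
    HasDerivAt (fun y : ℝ => φ (insertCoord i y xt))
      (fderiv ℝ (⇑φ) (insertCoord i y xt) (Pi.single i 1)) y := by
  have hL : HasDerivAt (fun y : ℝ => insertCoord i y xt) (Pi.single i 1) y := by
    have h1 : HasDerivAt (fun y : ℝ => insertCoord i 0 xt + y • (Pi.single i 1 : Fin n → ℝ))
        ((1 : ℝ) • (Pi.single i 1 : Fin n → ℝ)) y :=
      ((hasDerivAt_id y).smul_const (Pi.single i 1 : Fin n → ℝ)).const_add (insertCoord i 0 xt)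
    have h2 : (fun y : ℝ => insertCoord i y xt) =
        fun y : ℝ => insertCoord i 0 xt + y • (Pi.single i 1 : Fin n → ℝ) := by
      funext y; exact insertCoord_eq_add i xt y
    rw [h2]
    simpa using h1
  have hφ : HasFDerivAt (⇑φ) (fderiv ℝ (⇑φ) (insertCoord i y xt)) (insertCoord i y xt) :=
    (φ.differentiable.differentiableAt).hasFDerivAt
  exact hφ.comp_hasDerivAt y hL

lemma slice_iff (q : Fin n → ℝ) {U : Set (Fin n → ℝ)}
    (hU : MeasurableSet[MeasurableSpace.generateFrom
      {S : Set (Fin n → ℝ) | ∃ i : Fin n, S = {x | q i ≤ x i}}] U) :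
    ∀ (x : Fin n → ℝ) (y z : ℝ), (q i ≤ y ↔ q i ≤ z) →
      (Function.update x i y ∈ U ↔ Function.update x i z ∈ U) := by
  induction U, hU using MeasurableSpace.generateFrom_induction with
  | hC t ht _ =>
    obtain ⟨j, rfl⟩ := ht
    intro x y z hyz
    rcases eq_or_ne j i with h | h
    · subst h
      simpa using hyz
    · simp [Function.update_of_ne h]
  | empty => simp
  | compl t ht IH =>
    intro x y z hyz
    simpa using not_congr (IH x y z hyz)
  | iUnion s hs IH =>
    intro x y z hyz
    simp only [mem_iUnion]
    exact exists_congr fun k => IH k x y z hyz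

end Aux

theorem stmt1 {n : ℕ} (hn : 1 ≤ n) (q : Fin n → ℝ) (U : Set (Fin n → ℝ))
    (hU : MeasurableSet[MeasurableSpace.generateFrom
      {S : Set (Fin n → ℝ) | ∃ i : Fin n, S = {x | q i ≤ x i}}] U)
    (φ : SchwartzMap (Fin n → ℝ) ℝ) (i : Fin n) :
    ∃ ε : ({j : Fin n // j ≠ i} → ℝ) → ℝ, Measurable ε ∧
      (∀ xt, ε xt = -1 ∨ ε xt = 0 ∨ ε xt = 1) ∧
      ∫ x in U, fderiv ℝ (φ : (Fin n → ℝ) → ℝ) x (Pi.single i 1) =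
        ∫ xt in {xt | insertCoord i (q i) xt ∈ Piv i U},
          ε xt * φ (insertCoord i (q i) xt) := by
  classical
  have hUb : MeasurableSet U := by
    refine MeasurableSpace.generateFrom_le ?_ U hU
    rintro S ⟨j, rfl⟩
    exact measurableSet_le measurable_const (measurable_pi_apply j)
  set ε : ({j : Fin n // j ≠ i} → ℝ) → ℝ :=
    fun xt => (if insertCoord i (q i - 1) xt ∈ U then (1 : ℝ) else 0)
      - (if insertCoord i (q i) xt ∈ U then (1 : ℝ) else 0) with hεdef
  have hmeasε : Measurable ε := by
    apply Measurable.sub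
    · exact Measurable.ite ((measurable_insertCoord i (q i - 1)) hUb) measurable_const
        measurable_const
    · exact Measurable.ite ((measurable_insertCoord i (q i)) hUb) measurable_const
        measurable_const
  -- membership characterization along lines
  have hch : ∀ (xt : {j : Fin n // j ≠ i} → ℝ) (y : ℝ),
      insertCoord i y xt ∈ U ↔
        (if q i ≤ y then insertCoord i (q i) xt ∈ U else insertCoord i (q i - 1) xt ∈ U) := by
    intro xt y
    by_cases hy : q i ≤ y
    · rw [if_pos hy]
      have h := slice_iff i q hU (insertCoord i (q i) xt) y (q i) (by simpa using hy)
      rwa [update_insertCoord, update_insertCoord] at h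
    · rw [if_neg hy]
      have h := slice_iff i q hU (insertCoord i (q i) xt) y (q i - 1)
        (by constructor <;> intro h' <;> linarith)
      rwa [update_insertCoord, update_insertCoord] at h
  set PivS : Set ({j : Fin n // j ≠ i} → ℝ) := {xt | insertCoord i (q i) xt ∈ Piv i U}
    with hPivSdef
  have hPiv : ∀ xt, xt ∈ PivS ↔
      ¬(insertCoord i (q i - 1) xt ∈ U ↔ insertCoord i (q i) xt ∈ U) := by
    intro xt
    constructor
    · rintro ⟨y₁, y₂, h₁, h₂⟩
      rw [update_insertCoord, hch] at h₁
      rw [update_insertCoord, hch] at h₂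
      intro hiff
      split_ifs at h₁ h₂ <;> tauto
    · intro hne
      by_cases hA' : insertCoord i (q i - 1) xt ∈ U
      · refine ⟨q i - 1, q i, ?_, ?_⟩
        · rw [update_insertCoord, hch, if_neg (by linarith)]; exact hA'
        · rw [update_insertCoord, hch, if_pos le_rfl]; tauto
      · refine ⟨q i, q i - 1, ?_, ?_⟩
        · rw [update_insertCoord, hch, if_pos le_rfl]; tauto
        · rw [update_insertCoord, hch, if_neg (by linarith)]; exact hA'
  have hPivSmeas : MeasurableSet PivS := by
    have hmA : MeasurableSet ((fun xt => insertCoord i (q i - 1) xt) ⁻¹' U) :=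
      (measurable_insertCoord i (q i - 1)) hUb
    have hmB : MeasurableSet ((fun xt => insertCoord i (q i) xt) ⁻¹' U) :=
      (measurable_insertCoord i (q i)) hUb
    have hPeq : PivS = (((fun xt => insertCoord i (q i - 1) xt) ⁻¹' U)
          ∩ ((fun xt => insertCoord i (q i) xt) ⁻¹' U)ᶜ)
        ∪ (((fun xt => insertCoord i (q i - 1) xt) ⁻¹' U)ᶜ
          ∩ ((fun xt => insertCoord i (q i) xt) ⁻¹' U)) := by
      ext xt
      rw [hPiv xt]
      simp only [Set.mem_union, Set.mem_inter_iff, Set.mem_compl_iff, Set.mem_preimage]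
      tauto
    rw [hPeq]
    exact ((hmA.inter hmB.compl).union (hmA.compl.inter hmB))
  -- the derivative as a Schwartz function
  set D : (Fin n → ℝ) → ℝ := fun x => fderiv ℝ (⇑φ) x (Pi.single i 1) with hDdef
  set ψ : SchwartzMap (Fin n → ℝ) ℝ := LineDeriv.lineDerivOp (Pi.single i 1 : Fin n → ℝ) φ with hψdef
  have hψD : ⇑ψ = D := by
    funext x; exact SchwartzMap.lineDerivOp_apply_eq_fderiv (Pi.single i 1) φ x
  have hintD : Integrable D := hψD ▸ ψ.integrable
  have hint : Integrable (U.indicator D) := hintD.indicator hUb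
  -- the product structure
  haveI : Unique {j : Fin n // ¬ j ≠ i} :=
    ⟨⟨⟨i, by simp⟩⟩, by rintro ⟨j, hj⟩; simp only [ne_eq, not_not] at hj; subst hj; rfl⟩
  set F : (Fin n → ℝ) ≃ᵐ (({j : Fin n // j ≠ i} → ℝ) × ℝ) :=
    (MeasurableEquiv.piEquivPiSubtypeProd (fun _ : Fin n => ℝ) (fun j => j ≠ i)).trans
      ((MeasurableEquiv.refl ({j : Fin n // j ≠ i} → ℝ)).prodCongr
        (MeasurableEquiv.funUnique {j : Fin n // ¬ j ≠ i} ℝ)) with hFdef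
  have hmp : MeasurePreserving F volume
      ((volume : Measure ({j : Fin n // j ≠ i} → ℝ)).prod volume) := by
    have h1 := volume_preserving_piEquivPiSubtypeProd (fun _ : Fin n => ℝ) (fun j => j ≠ i)
    have h1' : MeasurePreserving
        (MeasurableEquiv.piEquivPiSubtypeProd (fun _ : Fin n => ℝ) (fun j => j ≠ i)) volume
        ((volume : Measure ({j : Fin n // j ≠ i} → ℝ)).prod
          (volume : Measure ({j : Fin n // ¬ j ≠ i} → ℝ))) := by
      rwa [← Measure.volume_eq_prod]
    have h2 : MeasurePreserving
        (Prod.map (id : ({j : Fin n // j ≠ i} → ℝ) → ({j : Fin n // j ≠ i} → ℝ))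
          (MeasurableEquiv.funUnique {j : Fin n // ¬ j ≠ i} ℝ))
        ((volume : Measure ({j : Fin n // j ≠ i} → ℝ)).prod volume)
        ((volume : Measure ({j : Fin n // j ≠ i} → ℝ)).prod volume) := by
      refine (MeasurePreserving.id _).prod ?_
      have h := measurePreserving_funUnique (volume : Measure ℝ) {j : Fin n // ¬ j ≠ i}
      convert h using 1
      · rfl
      rw [MeasureTheory.volume_pi]
      congr 1
      exact Subsingleton.elim _ _
    exact h2.comp h1'
  have hFsymm : ∀ (xt : {j : Fin n // j ≠ i} → ℝ) (y : ℝ),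
      F.symm (xt, y) = insertCoord i y xt := by
    intro xt y
    funext j
    rcases eq_or_ne j i with h | h
    · subst h
      simp [hFdef, MeasurableEquiv.trans, MeasurableEquiv.prodCongr, MeasurableEquiv.funUnique,
        MeasurableEquiv.piEquivPiSubtypeProd, Equiv.piEquivPiSubtypeProd_symm_apply,
        insertCoord]
    · simp [hFdef, MeasurableEquiv.trans, MeasurableEquiv.prodCongr, MeasurableEquiv.funUnique,
        MeasurableEquiv.piEquivPiSubtypeProd, Equiv.piEquivPiSubtypeProd_symm_apply,
        insertCoord, h]
  set G : (({j : Fin n // j ≠ i} → ℝ) × ℝ) → ℝ := fun p => U.indicator D (F.symm p) with hGdef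
  have hGF : ∀ x, G (F x) = U.indicator D x := by
    intro x
    rw [hGdef]
    simp
  have hGint : Integrable G ((volume : Measure ({j : Fin n // j ≠ i} → ℝ)).prod volume) := by
    rw [← hmp.integrable_comp_emb F.measurableEmbedding]
    have hcomp : (G ∘ F) = U.indicator D := funext hGF
    rw [hcomp]
    exact hint
  have step2 : ∫ x, U.indicator D x =
      ∫ p, G p ∂((volume : Measure ({j : Fin n // j ≠ i} → ℝ)).prod volume) := by
    rw [← hmp.integral_comp F.measurableEmbedding G]
    exact integral_congr_ae (Filter.Eventually.of_forall fun x => (hGF x).symm)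
  have step3 : ∫ p, G p ∂((volume : Measure ({j : Fin n // j ≠ i} → ℝ)).prod volume) =
      ∫ xt, ∫ y, G (xt, y) := integral_prod G hGint
  have hGval : ∀ xt y, G (xt, y) = U.indicator D (insertCoord i y xt) := by
    intro xt y
    show U.indicator D (F.symm (xt, y)) = _
    rw [hFsymm]
  -- the inner integral
  have hinner : ∀ xt : {j : Fin n // j ≠ i} → ℝ,
      (∫ y : ℝ, U.indicator D (insertCoord i y xt)) =
      PivS.indicator (fun xt => ε xt * φ (insertCoord i (q i) xt)) xt := by
    intro xt
    have hD' : ∀ y : ℝ, HasDerivAt (fun y : ℝ => φ (insertCoord i y xt))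
        (D (insertCoord i y xt)) y := fun y => hasDerivAt_line i xt φ y
    obtain ⟨hintψ, -, -⟩ := schwartz_line i xt ψ
    have hintD' : Integrable (fun y : ℝ => D (insertCoord i y xt)) := by
      have heq : (fun y : ℝ => ψ (insertCoord i y xt)) = fun y => D (insertCoord i y xt) := by
        funext y; rw [hψD]
      rwa [heq] at hintψ
    obtain ⟨-, htopφ, hbotφ⟩ := schwartz_line i xt φ
    have hIic : ∫ y in Set.Iic (q i), D (insertCoord i y xt)
        = φ (insertCoord i (q i) xt) - 0 :=
      integral_Iic_of_hasDerivAt_of_tendsto' (fun x _ => hD' x) hintD'.integrableOn hbotφ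
    have hIoi : ∫ y in Set.Ioi (q i), D (insertCoord i y xt)
        = 0 - φ (insertCoord i (q i) xt) :=
      integral_Ioi_of_hasDerivAt_of_tendsto' (fun x _ => hD' x) hintD'.integrableOn htopφ
    by_cases hA' : insertCoord i (q i - 1) xt ∈ U
      <;> by_cases hB' : insertCoord i (q i) xt ∈ U
    · -- slice is all of ℝ
      have hnot : xt ∉ PivS := by rw [hPiv]; tauto
      rw [Set.indicator_of_notMem hnot]
      have heq : (fun y : ℝ => U.indicator D (insertCoord i y xt)) =
          fun y : ℝ => D (insertCoord i y xt) :=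
        funext fun y => Set.indicator_of_mem (by rw [hch]; split_ifs <;> assumption) D
      rw [heq]
      have hsplit := intervalIntegral.integral_Iic_add_Ioi (μ := (volume : Measure ℝ)) (b := q i)
        (f := fun y : ℝ => D (insertCoord i y xt)) hintD'.integrableOn hintD'.integrableOn
      rw [← hsplit, hIic, hIoi]
      ring
    · -- slice is (-∞, q i)
      have hmem2 : xt ∈ PivS := by rw [hPiv]; tauto
      rw [Set.indicator_of_mem hmem2]
      have heq : (fun y : ℝ => U.indicator D (insertCoord i y xt)) =
          (Set.Iio (q i)).indicator (fun y : ℝ => D (insertCoord i y xt)) := by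
        funext y
        by_cases hy : y < q i
        · have h1 : insertCoord i y xt ∈ U := by rw [hch, if_neg (not_le.2 hy)]; exact hA'
          rw [Set.indicator_of_mem h1 D,
            Set.indicator_of_mem (show y ∈ Set.Iio (q i) from hy)]
        · have h1 : insertCoord i y xt ∉ U := by rw [hch, if_pos (not_lt.1 hy)]; exact hB'
          rw [Set.indicator_of_notMem h1 D,
            Set.indicator_of_notMem (show y ∉ Set.Iio (q i) from hy)]
      rw [heq, integral_indicator measurableSet_Iio, ← integral_Iic_eq_integral_Iio, hIic]
      have hε1 : ε xt = 1 := by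
        simp only [hεdef]
        rw [if_pos hA', if_neg hB']
        norm_num
      rw [hε1]
      ring
    · -- slice is [q i, ∞)
      have hmem2 : xt ∈ PivS := by rw [hPiv]; tauto
      rw [Set.indicator_of_mem hmem2]
      have heq : (fun y : ℝ => U.indicator D (insertCoord i y xt)) =
          (Set.Ici (q i)).indicator (fun y : ℝ => D (insertCoord i y xt)) := by
        funext y
        by_cases hy : q i ≤ y
        · have h1 : insertCoord i y xt ∈ U := by rw [hch, if_pos hy]; exact hB'
          rw [Set.indicator_of_mem h1 D,
            Set.indicator_of_mem (show y ∈ Set.Ici (q i) from hy)]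
        · have h1 : insertCoord i y xt ∉ U := by rw [hch, if_neg hy]; exact hA'
          rw [Set.indicator_of_notMem h1 D,
            Set.indicator_of_notMem (show y ∉ Set.Ici (q i) from hy)]
      rw [heq, integral_indicator measurableSet_Ici, integral_Ici_eq_integral_Ioi, hIoi]
      have hε1 : ε xt = -1 := by
        simp only [hεdef]
        rw [if_neg hA', if_pos hB']
        norm_num
      rw [hε1]
      ring
    · -- slice is empty
      have hnot : xt ∉ PivS := by rw [hPiv]; tauto
      rw [Set.indicator_of_notMem hnot]
      have heq : (fun y : ℝ => U.indicator D (insertCoord i y xt)) = fun _ : ℝ => (0 : ℝ) :=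
        funext fun y =>
          Set.indicator_of_notMem (by rw [hch]; split_ifs <;> assumption) D
      rw [heq, integral_zero]
  refine ⟨ε, hmeasε, ?_, ?_⟩
  · intro xt
    simp only [hεdef]
    split_ifs <;> norm_num
  · calc ∫ x in U, fderiv ℝ (⇑φ) x (Pi.single i 1) = ∫ x, U.indicator D x :=
          (integral_indicator hUb).symm
    _ = ∫ p, G p ∂((volume : Measure ({j : Fin n // j ≠ i} → ℝ)).prod volume) := step2
    _ = ∫ xt, ∫ y, G (xt, y) := step3
    _ = ∫ xt, PivS.indicator (fun xt => ε xt * φ (insertCoord i (q i) xt)) xt := by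
        refine integral_congr_ae (Filter.Eventually.of_forall fun xt => ?_)
        simp_rw [hGval]
        exact hinner xt
    _ = ∫ xt in PivS, ε xt * φ (insertCoord i (q i) xt) := integral_indicator hPivSmeas
end

section
/- Let Γ(Σ, x) = (2π)^{−n/2} det(Σ)^{−1/2} exp(−½ xᵀ Σ^{−1} x) be the density at x ∈ ℝⁿ of a centered Gaussian vector with positive definite covariance matrix Σ. Then for every pair of indices 1 ≤ i < j ≤ n, the partial derivative of Γ with respect to the off-diagonal entry Σ_{ij} equals the second partial derivative ∂²Γ/∂x_i∂x_j. -/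
open Matrix

/-- The density at `x` of a centered Gaussian vector with covariance matrix `S`. -/
noncomputable def gaussDensity {n : ℕ} (S : Matrix (Fin n) (Fin n) ℝ)
    (x : Fin n → ℝ) : ℝ :=
  (Real.sqrt ((2 * Real.pi) ^ n * S.det))⁻¹ *
    Real.exp (-(1 / 2) * (x ⬝ᵥ (S⁻¹ *ᵥ x)))

attribute [local instance] Matrix.linftyOpNormedRing Matrix.linftyOpNormedAlgebra

section Aux

variable {n : ℕ}

/-- The derivative of the quadratic form `z ↦ z ⬝ᵥ A *ᵥ z` at `y`. -/
noncomputable def dq (A : Matrix (Fin n) (Fin n) ℝ) (y : Fin n → ℝ) : (Fin n → ℝ) →L[ℝ] ℝ :=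
  ∑ k, ∑ l, A k l • ((y k • ContinuousLinearMap.proj l) + (y l • ContinuousLinearMap.proj k))

lemma quad_hasFDerivAt (A : Matrix (Fin n) (Fin n) ℝ) (y : Fin n → ℝ) :
    HasFDerivAt (fun z : Fin n → ℝ => z ⬝ᵥ A *ᵥ z) (dq A y) y := by
  have h : (fun z : Fin n → ℝ => z ⬝ᵥ A *ᵥ z)
      = fun z => ∑ k, ∑ l, A k l * (z k * z l) := by
    funext z
    simp only [dotProduct, mulVec, Finset.mul_sum]
    exact Finset.sum_congr rfl fun k _ => Finset.sum_congr rfl fun l _ => by ring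
  rw [h]
  exact HasFDerivAt.fun_sum fun k _ => HasFDerivAt.fun_sum fun l _ =>
    ((hasFDerivAt_apply k y).fun_mul (hasFDerivAt_apply l y)).const_mul (𝕜 := ℝ) (A k l)

lemma dq_apply_single (A : Matrix (Fin n) (Fin n) ℝ) (hA : Aᵀ = A) (y : Fin n → ℝ) (m : Fin n) :
    dq A y (Pi.single m 1) = 2 * (A *ᵥ y) m := by
  have hsymm : ∀ k, A k m = A m k := fun k => by
    rw [show A k m = Aᵀ m k from rfl, hA]
  simp only [dq, ContinuousLinearMap.coe_sum', Finset.sum_apply,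
    ContinuousLinearMap.add_apply, ContinuousLinearMap.coe_smul', Pi.smul_apply,
    ContinuousLinearMap.proj_apply, Pi.single_apply, smul_eq_mul, mul_add,
    Finset.sum_add_distrib]
  have e1 : ∀ k, ∑ l, A k l * (y k * (if l = m then (1:ℝ) else 0)) = A m k * y k := by
    intro k
    simp [mul_ite, hsymm k]
  have e2 : ∀ k, ∑ l, A k l * (y l * (if k = m then (1:ℝ) else 0))
      = if k = m then (A *ᵥ y) k else 0 := by
    intro k
    split <;> simp [mulVec, dotProduct, mul_comm]
  rw [Finset.sum_congr rfl fun k _ => e1 k, Finset.sum_congr rfl fun k _ => e2 k]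
  simp [mulVec, dotProduct, two_mul]

lemma gamma_hasFDerivAt (S : Matrix (Fin n) (Fin n) ℝ) (y : Fin n → ℝ) :
    HasFDerivAt (fun z => gaussDensity S z)
      ((Real.sqrt ((2 * Real.pi) ^ n * S.det))⁻¹ •
        (Real.exp (-(1 / 2) * (y ⬝ᵥ S⁻¹ *ᵥ y)) • ((-(1 / 2) : ℝ) • dq S⁻¹ y))) y := by
  exact (((quad_hasFDerivAt S⁻¹ y).const_mul (𝕜 := ℝ)
    (-(1/2 : ℝ))).exp).const_mul (𝕜 := ℝ) ((Real.sqrt ((2 * Real.pi) ^ n * S.det))⁻¹)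

lemma row_hasFDerivAt (A : Matrix (Fin n) (Fin n) ℝ) (i : Fin n) (x : Fin n → ℝ) :
    HasFDerivAt (fun y : Fin n → ℝ => (A *ᵥ y) i)
      (∑ l, A i l • ContinuousLinearMap.proj l : (Fin n → ℝ) →L[ℝ] ℝ) x := by
  have h : (fun y : Fin n → ℝ => (A *ᵥ y) i) = fun y => ∑ l, A i l * y l := rfl
  rw [h]
  exact HasFDerivAt.fun_sum fun l _ => (hasFDerivAt_apply l x).const_mul (𝕜 := ℝ) (A i l)

lemma rhs_eq (S : Matrix (Fin n) (Fin n) ℝ) (hA : (S⁻¹)ᵀ = S⁻¹) (i j : Fin n) (x : Fin n → ℝ) :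
    fderiv ℝ (fun y => fderiv ℝ (fun z => gaussDensity S z) y (Pi.single i 1)) x
        (Pi.single j 1) =
      gaussDensity S x * ((S⁻¹ *ᵥ x) i * (S⁻¹ *ᵥ x) j - S⁻¹ i j) := by
  set C := (Real.sqrt ((2 * Real.pi) ^ n * S.det))⁻¹ with hC
  have hg : (fun y => fderiv ℝ (fun z => gaussDensity S z) y (Pi.single i 1))
      = fun y => -(C * Real.exp (-(1 / 2) * (y ⬝ᵥ S⁻¹ *ᵥ y)) * (S⁻¹ *ᵥ y) i) := by
    funext y
    rw [(gamma_hasFDerivAt S y).fderiv]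
    simp [dq_apply_single S⁻¹ hA, smul_eq_mul]
    ring
  rw [hg]
  have htot : HasFDerivAt
      (fun y => -(C * Real.exp (-(1 / 2) * (y ⬝ᵥ S⁻¹ *ᵥ y)) * (S⁻¹ *ᵥ y) i))
      (-(((C * Real.exp (-(1 / 2) * (x ⬝ᵥ S⁻¹ *ᵥ x))) •
            (∑ l, S⁻¹ i l • ContinuousLinearMap.proj l : (Fin n → ℝ) →L[ℝ] ℝ)) +
          ((S⁻¹ *ᵥ x) i) • (C • (Real.exp (-(1 / 2) * (x ⬝ᵥ S⁻¹ *ᵥ x)) •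
            ((-(1 / 2) : ℝ) • dq S⁻¹ x))))) x := by
    exact ((((((quad_hasFDerivAt S⁻¹ x).const_mul (𝕜 := ℝ) (-(1/2 : ℝ))).exp).const_mul
      (𝕜 := ℝ) C).mul (row_hasFDerivAt S⁻¹ i x)).neg)
  rw [htot.fderiv]
  have hrow : (∑ l, S⁻¹ i l • ContinuousLinearMap.proj l :
      (Fin n → ℝ) →L[ℝ] ℝ) (Pi.single j 1) = S⁻¹ i j := by
    simp [Pi.single_apply]
  simp only [ContinuousLinearMap.neg_apply, ContinuousLinearMap.add_apply,
    ContinuousLinearMap.coe_smul', Pi.smul_apply, hrow, dq_apply_single S⁻¹ hA,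
    smul_eq_mul, gaussDensity]
  ring

/-- The linear functional `M ↦ x ⬝ᵥ M *ᵥ x` as a continuous linear map. -/
noncomputable def dotQuadCLM (x : Fin n → ℝ) : Matrix (Fin n) (Fin n) ℝ →L[ℝ] ℝ :=
  LinearMap.toContinuousLinearMap
    { toFun := fun M => x ⬝ᵥ (M *ᵥ x)
      map_add' := fun M N => by simp [Matrix.add_mulVec, dotProduct_add]
      map_smul' := fun c M => by
        simp [Matrix.smul_mulVec, dotProduct_smul] }

lemma trace_mul_std (A : Matrix (Fin n) (Fin n) ℝ) (i j : Fin n) :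
    Matrix.trace (A * single i j 1) = A j i := by
  rw [Matrix.trace]
  rw [Finset.sum_eq_single j]
  · simp
  · intro k _ hk
    simpa using Matrix.mul_single_apply_of_ne (c := (1:ℝ)) i j k k hk A
  · simp

lemma lhs_eq (S : Matrix (Fin n) (Fin n) ℝ) (hS : S.PosDef) (hA : (S⁻¹)ᵀ = S⁻¹)
    (i j : Fin n) (x : Fin n → ℝ) :
    deriv (fun t : ℝ => gaussDensity
        (S + t • (Matrix.single i j 1 + Matrix.single j i 1)) x) 0 =
      gaussDensity S x *
        ((S⁻¹ *ᵥ x) i * (S⁻¹ *ᵥ x) j - S⁻¹ i j) := by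
  have hdet : 0 < S.det := hS.det_pos
  have hu : IsUnit S := (Matrix.isUnit_iff_isUnit_det S).2 (isUnit_iff_ne_zero.2 hdet.ne')
  set E : Matrix (Fin n) (Fin n) ℝ :=
    Matrix.single i j 1 + Matrix.single j i 1 with hE
  set B : Matrix (Fin n) (Fin n) ℝ := S⁻¹ * E with hB
  set P : Polynomial ℝ :=
    (Matrix.det (1 + (Polynomial.X : Polynomial ℝ) • B.map Polynomial.C)).divX.divX with hP
  set c : ℝ := (2 * Real.pi) ^ n with hc
  have hcpos : 0 < c := pow_pos (by positivity) n
  have key : (fun t : ℝ => gaussDensity (S + t • E) x) = fun t : ℝ =>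
      (Real.sqrt (c * (S.det * (1 + Matrix.trace B * t + P.eval t * t ^ 2))))⁻¹ *
        Real.exp (-(1 / 2) * (x ⬝ᵥ (Ring.inverse (S + t • E) *ᵥ x))) := by
    funext t
    have hfact : S + t • E = S * (1 + t • B) := by
      rw [mul_add, mul_one, Matrix.mul_smul, hB, ← Matrix.mul_assoc,
        Matrix.mul_nonsing_inv S ((Matrix.isUnit_iff_isUnit_det S).1 hu), one_mul]
    rw [gaussDensity, Matrix.nonsing_inv_eq_ringInverse, hfact, Matrix.det_mul,
      Matrix.det_one_add_smul t B, ← hP, ← hc]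
  rw [key]
  have hD : HasDerivAt (fun t : ℝ => 1 + Matrix.trace B * t + P.eval t * t ^ 2)
      (Matrix.trace B) 0 := by
    have h := ((hasDerivAt_const (0:ℝ) (1:ℝ)).fun_add
        ((hasDerivAt_id (0:ℝ)).const_mul (Matrix.trace B))).fun_add
      ((P.hasDerivAt (0:ℝ)).fun_mul (hasDerivAt_pow 2 (0:ℝ)))
    simpa using h
  have harg : HasDerivAt
      (fun t : ℝ => c * (S.det * (1 + Matrix.trace B * t + P.eval t * t ^ 2)))
      (c * (S.det * Matrix.trace B)) 0 := (hD.const_mul S.det).const_mul c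
  have h00 : c * (S.det * (1 + Matrix.trace B * 0 + P.eval 0 * 0 ^ 2)) = c * S.det := by ring
  have hcd : (0:ℝ) < c * S.det := by positivity
  have hsqrt : HasDerivAt
      (fun t : ℝ => Real.sqrt (c * (S.det * (1 + Matrix.trace B * t + P.eval t * t ^ 2))))
      (c * (S.det * Matrix.trace B) / (2 * Real.sqrt (c * S.det))) 0 := by
    have hne : c * (S.det * (1 + Matrix.trace B * 0 + P.eval 0 * 0 ^ 2)) ≠ 0 := by
      rw [h00]; exact hcd.ne'
    have h2 := harg.sqrt hne
    rw [h00] at h2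
    exact h2
  have hspos : 0 < Real.sqrt (c * S.det) := Real.sqrt_pos.2 hcd
  have hinv : HasDerivAt
      (fun t : ℝ =>
        (Real.sqrt (c * (S.det * (1 + Matrix.trace B * t + P.eval t * t ^ 2))))⁻¹)
      (-(c * (S.det * Matrix.trace B) / (2 * Real.sqrt (c * S.det))) /
        (Real.sqrt (c * S.det)) ^ 2) 0 := by
    have hne : Real.sqrt (c * (S.det * (1 + Matrix.trace B * 0 + P.eval 0 * 0 ^ 2))) ≠ 0 := by
      rw [h00]; exact hspos.ne'
    have h2 := hsqrt.inv hne
    rw [h00] at h2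
    exact h2
  have haff : HasDerivAt (fun t : ℝ => S + t • E) E 0 := by
    have h := ((hasDerivAt_id (0:ℝ)).smul_const E).const_add S
    simp only [id, one_smul] at h
    exact h
  have hui : (↑(hu.unit)⁻¹ : Matrix (Fin n) (Fin n) ℝ) = S⁻¹ := by
    rw [Matrix.nonsing_inv_eq_ringInverse]
    conv_rhs => rw [← hu.unit_spec]
    rw [Ring.inverse_unit]
  have hF : HasFDerivAt (Ring.inverse : Matrix (Fin n) (Fin n) ℝ → Matrix (Fin n) (Fin n) ℝ)
      (-(ContinuousLinearMap.mulLeftRight ℝ _ (S⁻¹) (S⁻¹))) ((fun t : ℝ => S + t • E) 0) := by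
    have h2 := hasFDerivAt_ringInverse (𝕜 := ℝ) hu.unit
    rw [hui, hu.unit_spec] at h2
    simpa using h2
  have hinvM : HasDerivAt (fun t : ℝ => Ring.inverse (S + t • E)) (-(S⁻¹ * E * S⁻¹)) 0 := by
    have h2 := hF.comp_hasDerivAt 0 haff
    simp at h2
    exact h2
  have hN : HasDerivAt (fun t : ℝ => x ⬝ᵥ (Ring.inverse (S + t • E) *ᵥ x))
      (x ⬝ᵥ ((-(S⁻¹ * E * S⁻¹)) *ᵥ x)) 0 := by
    have h2 := (dotQuadCLM x).hasFDerivAt.comp_hasDerivAt 0 hinvM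
    exact h2
  have hinv00 : Ring.inverse (S + (0:ℝ) • E) = S⁻¹ := by
    rw [← Matrix.nonsing_inv_eq_ringInverse]
    simp
  have hexp : HasDerivAt
      (fun t : ℝ => Real.exp (-(1 / 2) * (x ⬝ᵥ (Ring.inverse (S + t • E) *ᵥ x))))
      (Real.exp (-(1 / 2) * (x ⬝ᵥ (S⁻¹ *ᵥ x))) *
        (-(1 / 2) * (x ⬝ᵥ ((-(S⁻¹ * E * S⁻¹)) *ᵥ x)))) 0 := by
    have h2 := (hN.const_mul (-(1/2 : ℝ))).exp
    rw [hinv00] at h2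
    simpa using h2
  rw [(hinv.fun_mul hexp).deriv]
  have htr : Matrix.trace B = 2 * S⁻¹ i j := by
    rw [hB, hE, mul_add, Matrix.trace_add, trace_mul_std, trace_mul_std,
      show S⁻¹ j i = (S⁻¹)ᵀ i j from rfl, hA]
    ring
  have hNval : x ⬝ᵥ ((-(S⁻¹ * E * S⁻¹)) *ᵥ x) = -(2 * ((S⁻¹ *ᵥ x) i * (S⁻¹ *ᵥ x) j)) := by
    rw [Matrix.neg_mulVec, dotProduct_neg, neg_inj, ← Matrix.mulVec_mulVec,
      ← Matrix.mulVec_mulVec, Matrix.dotProduct_mulVec,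
      show x ᵥ* S⁻¹ = S⁻¹ *ᵥ x from by conv_lhs => rw [← hA]; rw [Matrix.vecMul_transpose],
      hE, Matrix.add_mulVec, Matrix.single_mulVec, Matrix.single_mulVec,
      dotProduct_add]
    simp [dotProduct, Function.update_apply]
    ring
  rw [htr, hNval, gaussDensity, ← hc]
  set s : ℝ := Real.sqrt (c * S.det) with hs
  have hs2 : s ^ 2 = c * S.det := Real.sq_sqrt hcd.le
  have h000 : (1:ℝ) + Matrix.trace B * 0 + P.eval 0 * 0 ^ 2 = 1 := by ring
  rw [hinv00,
    show c * (S.det * (1 + 2 * S⁻¹ i j * 0 + Polynomial.eval 0 P * 0 ^ 2)) = c * S.det by ring]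
  have hsne : s ≠ 0 := hspos.ne'
  set a := S⁻¹ i j with ha
  set W1 := (S⁻¹ *ᵥ x) i with hW1
  set W2 := (S⁻¹ *ᵥ x) j with hW2
  set e := Real.exp (-(1 / 2) * (x ⬝ᵥ S⁻¹ *ᵥ x)) with he
  rw [show c * (S.det * (2 * a)) = s ^ 2 * (2 * a) by rw [hs2]; ring, ← hs]
  clear_value s a W1 W2 e
  field_simp
  ring

end Aux

theorem stmt2 {n : ℕ} (i j : Fin n) (hij : i < j)
    (S : Matrix (Fin n) (Fin n) ℝ) (hS : S.PosDef) (x : Fin n → ℝ) :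
    deriv (fun t : ℝ => gaussDensity
        (S + t • (Matrix.single i j 1 + Matrix.single j i 1)) x) 0 =
      fderiv ℝ (fun y => fderiv ℝ (fun z => gaussDensity S z) y (Pi.single i 1)) x
        (Pi.single j 1) := by
  have hSsymm : Sᵀ = S := by
    have h := hS.1
    simpa [Matrix.IsHermitian, Matrix.conjTranspose_eq_transpose_of_trivial] using h
  have hA : (S⁻¹)ᵀ = S⁻¹ := by rw [Matrix.transpose_nonsing_inv, hSsymm]
  rw [lhs_eq S hS hA i j x, rhs_eq S hA i j x]
end
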